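/- Let Γ be a group with a subgroup N of index 2, and let ρ : N → U(n) be an irreducible unitary representation. Then ρ cannot simultaneously admit a real extension ρ̂ and a quaternionic extension ρ̃ to Γ. (A real extension satisfies ρ̂(x)² = ρ(x²) for x ∉ N; a quaternionic extension satisfies ρ̃(x)² = -ρ(x²).) -/

import Mathlib

/-- An irreducible unitary representation `ρ` of the index-two subgroup `N = ξ⁻¹(0)` of `Γ`
cannot simultaneously admit a real extension `ρ̂` (a twisted homomorphism into the extended
unitary group, so that `ρ̂(x)² = ρ(x²)` for `x ∉ N`) and a quaternionic extension `ρ̃`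
(satisfying the sign rule `ρ̃(a)ρ̃(b) = (-1)^{ξ(a)ξ(b)} ρ̃(ab)`, so `ρ̃(x)² = -ρ(x²)`). -/
theorem stmt_6 {n : ℕ} (hn : 0 < n) {Γ : Type*} [Group Γ]
    (ξ : Γ → ZMod 2) (hξ : ∀ a b, ξ (a * b) = ξ a + ξ b) (hsurj : Function.Surjective ξ)
    (ρhat ρtil : Γ → Matrix (Fin n) (Fin n) ℂ)
    (hhatU : ∀ a, ρhat a ∈ Matrix.unitaryGroup (Fin n) ℂ)
    (htilU : ∀ a, ρtil a ∈ Matrix.unitaryGroup (Fin n) ℂ)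
    (hagree : ∀ z, ξ z = 0 → ρhat z = ρtil z)
    (hreal : ∀ a b, ρhat (a * b) =
      ρhat a * (if ξ a = 0 then ρhat b else (ρhat b).map (starRingEnd ℂ)))
    (hquat : ∀ a b, ρtil (a * b) = ((-1 : ℂ) ^ ((ξ a).val * (ξ b).val)) •
      (ρtil a * (if ξ a = 0 then ρtil b else (ρtil b).map (starRingEnd ℂ))))
    (hirr : ∀ W : Submodule ℂ (Fin n → ℂ),
      (∀ z, ξ z = 0 → ∀ v ∈ W, (ρhat z).mulVec v ∈ W) → W = ⊥ ∨ W = ⊤) :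
    False := by
  classical
  set cj : Matrix (Fin n) (Fin n) ℂ → Matrix (Fin n) (Fin n) ℂ :=
    fun M => M.map (starRingEnd ℂ) with hcj
  have cj_mul : ∀ M N, cj (M * N) = cj M * cj N := fun M N => Matrix.map_mul
  have cj_one : cj (1 : Matrix (Fin n) (Fin n) ℂ) = 1 :=
    Matrix.map_one _ (map_zero _) (map_one _)
  have cj_cj : ∀ M, cj (cj M) = M := by
    intro M; ext i j; simp [hcj]
  have cj_smul : ∀ (c : ℂ) M, cj (c • M) = (starRingEnd ℂ c) • cj M := by
    intro c M; ext i j; simp [hcj]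
  have h01 : ∀ a : ZMod 2, a = 0 ∨ a = 1 := by decide
  -- ξ 1 = 0
  have hξ1 : ξ 1 = 0 := by
    have h := hξ 1 1; rw [mul_one] at h; exact (left_eq_add.mp h)
  -- ρhat 1 = 1
  have hhat1 : ρhat 1 = 1 := by
    have h := hreal 1 1
    rw [mul_one, if_pos hξ1] at h
    have hu : star (ρhat 1) * ρhat 1 = 1 := (Unitary.mem_iff.mp (hhatU 1)).1
    calc ρhat 1 = (star (ρhat 1) * ρhat 1) * ρhat 1 := by rw [hu, one_mul]
    _ = star (ρhat 1) * (ρhat 1 * ρhat 1) := by rw [mul_assoc]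
    _ = star (ρhat 1) * ρhat 1 := by rw [← h]
    _ = 1 := hu
  have htil1 : ρtil 1 = 1 := by rw [← hagree 1 hξ1, hhat1]
  obtain ⟨x, hx⟩ := hsurj 1
  have hxne : ξ x ≠ 0 := by rw [hx]; decide
  have hxval : (ξ x).val = 1 := by rw [hx]; rfl
  have hxinv : ξ x⁻¹ = 1 := by
    have h := hξ x x⁻¹
    rw [mul_inv_cancel, hξ1, hx] at h
    rcases h01 (ξ x⁻¹) with h0 | h1
    · rw [h0] at h; exact absurd h (by decide)
    · exact h1
  have hxinvval : (ξ x⁻¹).val = 1 := by rw [hxinv]; rfl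
  set A := ρhat x with hA
  set A' := ρhat x⁻¹ with hA'
  set B := ρtil x with hB
  set B' := ρtil x⁻¹ with hB'
  -- A * cj A' = 1
  have hAinv : A * cj A' = 1 := by
    have h := hreal x x⁻¹
    rw [mul_inv_cancel, hhat1, if_neg hxne] at h
    exact h.symm
  have hAinv' : cj A' * A = 1 := mul_eq_one_comm.mp hAinv
  -- B * cj B' = -1
  have hBinv : B * cj B' = -1 := by
    have h := hquat x x⁻¹
    rw [mul_inv_cancel, htil1, if_neg hxne, hxval, hxinvval] at h
    simp only [mul_one, pow_one, neg_smul, one_smul] at h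
    exact (neg_eq_iff_eq_neg.mp h.symm)
  have hBinv' : cj B' * B = -1 := by
    have h : B * (-(cj B')) = 1 := by rw [mul_neg, hBinv, neg_neg]
    have h2 : (-(cj B')) * B = 1 := mul_eq_one_comm.mp h
    rw [neg_mul] at h2
    exact neg_eq_iff_eq_neg.mp h2
  -- Commutation : cj A' * B commutes with cj (ρhat z) for z ∈ N
  have hcomm : ∀ z, ξ z = 0 →
      cj (ρhat z) * (cj A' * B) = (cj A' * B) * cj (ρhat z) := by
    intro z hz
    set R := ρhat z with hR
    have hzval : (ξ z).val = 0 := by rw [hz]; rfl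
    have hxz : ξ (x * z) = 1 := by rw [hξ, hx, hz, add_zero]
    have hxzne : ξ (x * z) ≠ 0 := by rw [hxz]; decide
    have hxzval : (ξ (x * z)).val = 1 := by rw [hxz]; rfl
    have hξw : ξ ((x * z) * x⁻¹) = 0 := by
      rw [hξ, hxz, hxinv]; decide
    have E1 : ρhat (x * z) = A * cj R := by
      have h := hreal x z; rw [if_neg hxne] at h; exact h
    have E2 : ρhat ((x * z) * x⁻¹) = (A * cj R) * cj A' := by
      have h := hreal (x * z) x⁻¹; rw [if_neg hxzne, E1] at h; exact h
    have E3 : ρtil (x * z) = B * cj R := by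
      have h := hquat x z
      rw [if_neg hxne, hxval, hzval] at h
      simp only [mul_zero, pow_zero, one_smul] at h
      rw [h, ← hagree z hz]
    have E4 : ρtil ((x * z) * x⁻¹) = -((B * cj R) * cj B') := by
      have h := hquat (x * z) x⁻¹
      rw [if_neg hxzne, hxzval, hxinvval, E3] at h
      simpa only [mul_one, pow_one, neg_smul, one_smul] using h
    have E : (A * cj R) * cj A' = -((B * cj R) * cj B') := by
      rw [← E2, ← E4, hagree _ hξw]
    have h1 : cj A' * (((A * cj R) * cj A') * B)
        = cj A' * ((-((B * cj R) * cj B')) * B) := by rw [E]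
    calc cj R * (cj A' * B)
        = (cj A' * A) * (cj R * (cj A' * B)) := by rw [hAinv', one_mul]
      _ = cj A' * (((A * cj R) * cj A') * B) := by simp only [mul_assoc]
      _ = cj A' * ((-((B * cj R) * cj B')) * B) := h1
      _ = -(cj A' * (B * (cj R * (cj B' * B)))) := by
          simp only [neg_mul, mul_neg, mul_assoc]
      _ = -(cj A' * (B * (cj R * (-1)))) := by rw [hBinv']
      _ = (cj A' * B) * cj R := by
          simp only [mul_neg, mul_one, neg_neg, mul_assoc]
  set M := cj A' * B with hMdef
  set T := cj M with hTdef
  have hcommT : ∀ z, ξ z = 0 → ρhat z * T = T * ρhat z := by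
    intro z hz
    have h := congrArg cj (hcomm z hz)
    simp only [cj_mul, cj_cj] at h
    simp only [hTdef, hMdef, cj_mul, cj_cj]
    simpa only [hMdef, cj_mul, cj_cj] using h
  -- Schur's lemma via the irreducibility hypothesis
  haveI : Nonempty (Fin n) := ⟨⟨0, hn⟩⟩
  set e : Module.End ℂ (Fin n → ℂ) := Matrix.mulVecLin T with he
  obtain ⟨c, hc⟩ := Module.End.exists_eigenvalue e
  have hW : ∀ z, ξ z = 0 → ∀ v ∈ e.eigenspace c,
      (ρhat z).mulVec v ∈ e.eigenspace c := by
    intro z hz v hv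
    rw [Module.End.mem_eigenspace_iff] at hv ⊢
    show T.mulVec ((ρhat z).mulVec v) = c • (ρhat z).mulVec v
    have hv' : T.mulVec v = c • v := hv
    rw [Matrix.mulVec_mulVec, ← hcommT z hz, ← Matrix.mulVec_mulVec, hv',
      Matrix.mulVec_smul]
  rcases hirr _ hW with hbot | htop
  · exact hc hbot
  -- T acts as the scalar c
  have hTv : ∀ v : Fin n → ℂ, T.mulVec v = c • v := by
    intro v
    have : v ∈ e.eigenspace c := htop ▸ Submodule.mem_top
    exact Module.End.mem_eigenspace_iff.mp this
  have hT : T = c • (1 : Matrix (Fin n) (Fin n) ℂ) := by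
    ext i j
    have h := congrFun (hTv (Pi.single j 1)) i
    simp only [Matrix.mulVec_single, mul_one, Pi.smul_apply, Pi.single_apply,
      smul_eq_mul, Matrix.col_apply, op_smul_eq_mul] at h
    rw [h, Matrix.smul_apply, Matrix.one_apply, smul_eq_mul]
  have hM : M = (starRingEnd ℂ c) • (1 : Matrix (Fin n) (Fin n) ℂ) := by
    have := congrArg cj hT
    rwa [cj_cj, cj_smul, cj_one] at this
  have hBA : B = (starRingEnd ℂ c) • A := by
    have h : A * M = A * ((starRingEnd ℂ c) • 1) := by rw [hM]
    rw [hMdef, ← mul_assoc, hAinv, one_mul, Matrix.mul_smul, mul_one] at h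
    exact h
  -- now use x²
  have hξxx : ξ (x * x) = 0 := by rw [hξ, hx]; decide
  have Ehat : ρhat (x * x) = A * cj A := by
    have h := hreal x x; rw [if_neg hxne] at h; exact h
  have Etil : ρtil (x * x) = -(B * cj B) := by
    have h := hquat x x
    rw [if_neg hxne, hxval] at h
    simpa only [mul_one, pow_one, neg_smul, one_smul] using h
  have E5 : A * cj A = -(B * cj B) := by rw [← Ehat, ← Etil, hagree _ hξxx]
  set s : ℂ := starRingEnd ℂ c * c with hs
  have E6 : A * cj A = -(s • (A * cj A)) := by
    conv_lhs => rw [E5, hBA, cj_smul, Complex.conj_conj, smul_mul_assoc,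
      mul_smul_comm, smul_smul, ← hs]
  have hU : A * star A = 1 := Matrix.mem_unitaryGroup_iff.mp (hhatU x)
  have hinv : (A * cj A) * (cj (star A) * star A) = 1 := by
    calc (A * cj A) * (cj (star A) * star A)
        = A * ((cj A * cj (star A)) * star A) := by simp only [mul_assoc]
      _ = A * star A := by rw [← cj_mul, hU, cj_one, one_mul, hU]
      _ = 1 := hU
  have E7 : (1 : Matrix (Fin n) (Fin n) ℂ) = -(s • (1 : Matrix (Fin n) (Fin n) ℂ)) := by
    calc (1 : Matrix (Fin n) (Fin n) ℂ)
        = (A * cj A) * (cj (star A) * star A) := hinv.symm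
      _ = (-(s • (A * cj A))) * (cj (star A) * star A) := by rw [← E6]
      _ = -(s • ((A * cj A) * (cj (star A) * star A))) := by
          rw [neg_mul, Matrix.smul_mul]
      _ = -(s • 1) := by rw [hinv]
  have E8 : (1 : ℂ) = -s := by
    have h := congrFun (congrFun E7 ⟨0, hn⟩) ⟨0, hn⟩
    simpa [Matrix.one_apply] using h
  have hns : s = (Complex.normSq c : ℂ) := by
    rw [hs]; exact (Complex.normSq_eq_conj_mul_self).symm
  rw [hns] at E8
  have : (1 : ℝ) = -(Complex.normSq c) := by
    have := congrArg Complex.re E8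
    simpa using this
  nlinarith [Complex.normSq_nonneg c]
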